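/- arXiv:0709.2908 — 4 statements merged into one kernel-verified Lean document; each statement's English description precedes it below -/
import Mathlib

section
/- Let x₁, …, x₁₂ be elements of a field of characteristic 0. There exist a monic polynomial R of degree 4 and polynomials A₂, A₃ of degrees at most 2 and 3 respectively with ∏ᵢ(X − xᵢ) = R³ + A₂·R + A₃ if and only if the coefficient of X⁻¹ in the Laurent expansion at infinity of (∏ᵢ₌₁¹²(X − xᵢ))^{1/3} vanishes; moreover when they exist, R, A₂, A₃ are unique. -/
open Polynomial

section MestreAux

variable {K : Type*} [Field K] [CharZero K]

private lemma reflect_reflect' (N : ℕ) (f : K[X]) : reflect N (reflect N f) = f := by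
  ext i
  simp [coeff_reflect, revAt_invol]

private lemma reflect_one_linear (a : K) :
    reflect 1 ((1 : K[X]) - C a * X) = X - C a := by
  ext i
  simp only [coeff_reflect]
  match i with
  | 0 => simp [revAt_le, coeff_one, coeff_X]
  | 1 => simp [revAt_le, coeff_one, coeff_X]
  | (n+2) =>
      have h : revAt 1 (n+2) = n+2 := revAt_eq_self_of_lt (by omega)
      rw [h]
      simp [coeff_X, coeff_one, coeff_C]

private lemma natDegree_linear_le (a : K) : ((1 : K[X]) - C a * X).natDegree ≤ 1 := by
  refine (natDegree_sub_le _ _).trans ?_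
  simp only [natDegree_one, max_le_iff]
  exact ⟨by omega, (natDegree_C_mul_le _ _).trans (by simp)⟩

private lemma prod_reflect (s : Finset (Fin 12)) (x : Fin 12 → K) :
    ∏ i ∈ s, (X - C (x i)) = reflect s.card (∏ i ∈ s, ((1 : K[X]) - C (x i) * X)) := by
  induction s using Finset.cons_induction with
  | empty => simp [reflect_C (1:K) 0]
  | cons a s ha ih =>
      rw [Finset.prod_cons, Finset.prod_cons, Finset.card_cons]
      have hdeg : (∏ i ∈ s, ((1 : K[X]) - C (x i) * X)).natDegree ≤ s.card := by
        refine (natDegree_prod_le _ _).trans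
          ((Finset.sum_le_sum fun i _ => natDegree_linear_le (x i)).trans ?_)
        simp
      have := reflect_mul ((1 : K[X]) - C (x a) * X)
        (∏ i ∈ s, ((1 : K[X]) - C (x i) * X)) (natDegree_linear_le (x a)) hdeg
      rw [add_comm] at this
      rw [this, reflect_one_linear, ih]

end MestreAux

/-- Mestre's construction: let `x₁, …, x₁₂` lie in a field `K` of characteristic 0, and
let `S` be the formal cube root of `∏ᵢ (X - xᵢ)` at infinity; writing `t = X⁻¹`, `S` is
the unique power series in `t` with constant term 1 satisfying `S³ = ∏ᵢ (1 - xᵢ t)`, so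
that `(∏ᵢ (X - xᵢ))^{1/3} = X⁴ · S(X⁻¹)` and the coefficient of `X⁻¹` therein is the
coefficient of `t⁵` in `S`.  Then there exist a monic quartic `R` and polynomials
`A₂, A₃` of degrees at most 2 and 3 with `∏ᵢ (X - xᵢ) = R³ + A₂·R + A₃` if and only if
that coefficient vanishes; moreover `R, A₂, A₃` are then unique. -/
theorem mestre_cube_root_decomposition (K : Type*) [Field K] [CharZero K]
    (x : Fin 12 → K) (S : PowerSeries K)
    (hS1 : PowerSeries.constantCoeff S = 1)
    (hS3 : S ^ 3 = ∏ i, (1 - PowerSeries.C (x i) * PowerSeries.X)) :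
    (∃! RA : Polynomial K × Polynomial K × Polynomial K,
        RA.1.Monic ∧ RA.1.degree = 4 ∧ RA.2.1.degree ≤ 2 ∧ RA.2.2.degree ≤ 3 ∧
        ∏ i, (X - C (x i)) = RA.1 ^ 3 + RA.2.1 * RA.1 + RA.2.2) ↔
      PowerSeries.coeff 5 S = 0 := by
  set P : K[X] := ∏ i, (X - C (x i)) with hP
  set Q : K[X] := ∏ i, ((1 : K[X]) - C (x i) * X) with hQdef
  -- basic facts about Q
  have hQdeg : Q.natDegree ≤ 12 := by
    refine (natDegree_prod_le _ _).trans
      ((Finset.sum_le_sum fun i _ => natDegree_linear_le (x i)).trans ?_)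
    simp
  have hPQ : P = reflect 12 Q := by
    have := prod_reflect (Finset.univ : Finset (Fin 12)) x
    simpa using this
  have hQS : (Q : PowerSeries K) = S ^ 3 := by
    rw [hS3, hQdef]
    rw [show ((∏ i, ((1:K[X]) - C (x i) * X) : K[X]) : PowerSeries K)
        = Polynomial.coeToPowerSeries.ringHom (∏ i, ((1:K[X]) - C (x i) * X)) from rfl,
      map_prod]
    refine Finset.prod_congr rfl fun i _ => ?_
    simp [Polynomial.coeToPowerSeries.ringHom_apply]
  -- the key characterization
  have key : ∀ R : K[X], R.Monic → R.natDegree = 4 →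
      ((P - R ^ 3).degree ≤ 6 ↔
        (PowerSeries.X : PowerSeries K) ^ 6 ∣ (S - ((reflect 4 R : K[X]) : PowerSeries K))) := by
    intro R hRm hRd
    set r : K[X] := reflect 4 R with hrdef
    have hrdeg : r.natDegree ≤ 4 := by
      rw [natDegree_le_iff_coeff_eq_zero]
      intro N hN
      rw [hrdef, coeff_reflect, revAt_eq_self_of_lt (by omega)]
      exact coeff_eq_zero_of_natDegree_lt (by omega)
    have hr0 : r.coeff 0 = 1 := by
      rw [hrdef, coeff_reflect, revAt_le (by omega)]
      simpa [hRd] using hRm.coeff_natDegree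
    -- reflect of R^3
    have hR2 : (R ^ 2).natDegree ≤ 8 := natDegree_pow_le.trans (by omega)
    have hrefl3 : reflect 12 (R ^ 3) = r ^ 3 := by
      have h1 : reflect 12 (R ^ 2 * R) = reflect 8 (R ^ 2) * reflect 4 R :=
        reflect_mul (R ^ 2) R (F := 8) (G := 4) hR2 hRd.le
      have h2 : reflect 8 (R * R) = reflect 4 R * reflect 4 R :=
        reflect_mul R R (F := 4) (G := 4) hRd.le hRd.le
      calc reflect 12 (R ^ 3) = reflect 12 (R ^ 2 * R) := by ring_nf
        _ = reflect 8 (R ^ 2) * reflect 4 R := h1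
        _ = reflect 8 (R * R) * reflect 4 R := by ring_nf
        _ = (reflect 4 R * reflect 4 R) * reflect 4 R := by rw [h2]
        _ = r ^ 3 := by rw [← hrdef]; ring
    have hR3 : R ^ 3 = reflect 12 (r ^ 3) := by
      rw [← hrefl3, reflect_reflect']
    have hr3deg : (r ^ 3).natDegree ≤ 12 := natDegree_pow_le.trans (by omega)
    -- step 1 : degree condition ↔ coefficient matching
    have step1 : (P - R ^ 3).degree ≤ 6 ↔ ∀ m : ℕ, m < 6 → Q.coeff m = (r ^ 3).coeff m := by
      have hcoeff : ∀ j : ℕ, (P - R ^ 3).coeff j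
          = Q.coeff (revAt 12 j) - (r ^ 3).coeff (revAt 12 j) := by
        intro j
        rw [coeff_sub, hPQ, hR3, coeff_reflect, coeff_reflect]
      rw [degree_le_iff_coeff_zero]
      constructor
      · intro h m hm
        have hj : ((6 : WithBot ℕ) < ((12 - m : ℕ) : WithBot ℕ)) := by
          exact_mod_cast (show 6 < 12 - m by omega)
        have := h (12 - m) hj
        rw [hcoeff, revAt_le (by omega)] at this
        have hm' : 12 - (12 - m) = m := by omega
        rw [hm'] at this
        exact sub_eq_zero.mp this
      · intro h j hj
        have hj' : 6 < j := by exact_mod_cast hj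
        rw [hcoeff]
        by_cases hj12 : j ≤ 12
        · rw [revAt_le hj12]
          rw [h (12 - j) (by omega)]
          ring
        · rw [revAt_eq_self_of_lt (by omega)]
          rw [coeff_eq_zero_of_natDegree_lt (by omega),
            coeff_eq_zero_of_natDegree_lt (by omega)]
          ring
    -- step 2 : coefficient matching ↔ X^6 ∣ S^3 - r^3
    have step2 : (∀ m : ℕ, m < 6 → Q.coeff m = (r ^ 3).coeff m) ↔
        (PowerSeries.X : PowerSeries K) ^ 6 ∣ (S ^ 3 - ((r : PowerSeries K)) ^ 3) := by
      rw [PowerSeries.X_pow_dvd_iff]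
      constructor
      · intro h m hm
        rw [map_sub]
        have : (PowerSeries.coeff m) (S ^ 3) = Q.coeff m := by
          rw [← hQS, Polynomial.coeff_coe]
        rw [this, ← Polynomial.coe_pow, Polynomial.coeff_coe, h m hm, sub_self]
      · intro h m hm
        have := h m hm
        rw [map_sub, sub_eq_zero, ← hQS, Polynomial.coeff_coe,
          ← Polynomial.coe_pow, Polynomial.coeff_coe] at this
        exact this
    -- step 3 : cube root extraction
    have hrc : PowerSeries.constantCoeff (r : PowerSeries K) = 1 := by
      rw [← PowerSeries.coeff_zero_eq_constantCoeff_apply, Polynomial.coeff_coe, hr0]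
    have step3 : (PowerSeries.X : PowerSeries K) ^ 6 ∣ (S ^ 3 - ((r : PowerSeries K)) ^ 3) ↔
        (PowerSeries.X : PowerSeries K) ^ 6 ∣ (S - (r : PowerSeries K)) := by
      have hfac : S ^ 3 - ((r : PowerSeries K)) ^ 3
          = (S - (r : PowerSeries K)) * (S ^ 2 + S * r + (r : PowerSeries K) ^ 2) := by ring
      have hU : IsUnit (S ^ 2 + S * (r : PowerSeries K) + (r : PowerSeries K) ^ 2) := by
        rw [PowerSeries.isUnit_iff_constantCoeff]
        have : PowerSeries.constantCoeff (S ^ 2 + S * (r : PowerSeries K)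
            + (r : PowerSeries K) ^ 2) = 3 := by
          rw [map_add, map_add, map_pow, map_mul, map_pow, hS1, hrc]
          norm_num
        rw [this]
        exact isUnit_iff_ne_zero.mpr (by norm_num)
      constructor
      · intro h
        rw [hfac] at h
        exact (IsUnit.dvd_mul_right hU).mp h
      · intro h
        rw [hfac]
        exact h.mul_right _
    rw [step1, step2, step3]
  -- now the main equivalence
  constructor
  · -- existence → coefficient vanishes
    rintro ⟨⟨R, A₂, A₃⟩, ⟨hRm, hRd, hA₂, hA₃, heq⟩, -⟩
    have hRd' : R.natDegree = 4 := natDegree_eq_of_degree_eq_some hRd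
    have hdeg : (P - R ^ 3).degree ≤ 6 := by
      have : P - R ^ 3 = A₂ * R + A₃ := by rw [heq]; ring
      rw [this]
      refine (degree_add_le _ _).trans ?_
      rw [max_le_iff]
      constructor
      · refine (degree_mul_le _ _).trans ?_
        calc A₂.degree + R.degree ≤ (2 : WithBot ℕ) + 4 := add_le_add hA₂ (le_of_eq hRd)
          _ = 6 := by norm_num
      · exact hA₃.trans (by norm_num)
    have hdvd := (key R hRm hRd').mp hdeg
    rw [PowerSeries.X_pow_dvd_iff] at hdvd
    have := hdvd 5 (by omega)
    rw [map_sub, sub_eq_zero, Polynomial.coeff_coe, coeff_reflect,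
      revAt_eq_self_of_lt (by omega), coeff_eq_zero_of_natDegree_lt (by omega)] at this
    exact this
  · -- coefficient vanishes → unique existence
    intro h5
    set r : K[X] := PowerSeries.trunc 6 S with hrdef
    have hrcoeff : ∀ m : ℕ, m < 6 → r.coeff m = PowerSeries.coeff m S := by
      intro m hm
      rw [hrdef, PowerSeries.coeff_trunc, if_pos hm]
    have hrcoeff' : ∀ m : ℕ, 6 ≤ m → r.coeff m = 0 := by
      intro m hm
      rw [hrdef, PowerSeries.coeff_trunc, if_neg (by omega)]
    have hrdeg : r.natDegree ≤ 4 := by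
      rw [natDegree_le_iff_coeff_eq_zero]
      intro N hN
      rcases lt_or_ge N 6 with h | h
      · have hN5 : N = 5 := by omega
        rw [hN5, hrcoeff 5 (by omega), h5]
      · exact hrcoeff' N h
    have hr0 : r.coeff 0 = 1 := by
      rw [hrcoeff 0 (by omega), PowerSeries.coeff_zero_eq_constantCoeff, hS1]
    set R : K[X] := reflect 4 r with hRdef
    have hR4 : R.coeff 4 = 1 := by
      rw [hRdef, coeff_reflect, revAt_le (by omega)]
      simpa using hr0
    have hRdegle : R.natDegree ≤ 4 := by
      rw [natDegree_le_iff_coeff_eq_zero]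
      intro N hN
      rw [hRdef, coeff_reflect, revAt_eq_self_of_lt (by omega)]
      exact coeff_eq_zero_of_natDegree_lt (by omega)
    have hRd' : R.natDegree = 4 := by
      refine le_antisymm hRdegle ?_
      by_contra h
      have hz := coeff_eq_zero_of_natDegree_lt (show R.natDegree < 4 by omega)
      rw [hR4] at hz
      exact one_ne_zero hz
    have hRm : R.Monic := by
      rw [Monic, leadingCoeff, hRd', hR4]
    have hRdeg : R.degree = 4 := by
      rw [degree_eq_natDegree (hRm.ne_zero), hRd']
      rfl
    have hreflR : reflect 4 R = r := by rw [hRdef, reflect_reflect']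
    -- X^6 divides S - r
    have hdvd : (PowerSeries.X : PowerSeries K) ^ 6 ∣ (S - (r : PowerSeries K)) := by
      rw [PowerSeries.X_pow_dvd_iff]
      intro m hm
      rw [map_sub, Polynomial.coeff_coe, hrcoeff m hm, sub_self]
    have hdeg : (P - R ^ 3).degree ≤ 6 := by
      rw [key R hRm hRd', hreflR]
      exact hdvd
    set A₂ : K[X] := (P - R ^ 3) /ₘ R with hA₂def
    set A₃ : K[X] := (P - R ^ 3) %ₘ R with hA₃def
    have hsum : A₃ + R * A₂ = P - R ^ 3 := modByMonic_add_div (P - R ^ 3) R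
    have hA₃deg : A₃.degree < (4 : ℕ) := by
      have := degree_modByMonic_lt (P - R ^ 3) hRm
      rwa [hRdeg] at this
    have hA₃le : A₃.degree ≤ 3 := by
      rw [degree_le_iff_coeff_zero]
      intro m hm
      refine coeff_eq_zero_of_degree_lt (lt_of_lt_of_le hA₃deg ?_)
      have h3 : (3 : ℕ) < m := by exact_mod_cast hm
      exact_mod_cast (show (4 : ℕ) ≤ m by omega)
    have hA₂le : A₂.degree ≤ 2 := by
      have h1 : (P - R ^ 3).natDegree ≤ 6 := natDegree_le_iff_degree_le.mpr hdeg
      have h2 : A₂.natDegree ≤ 2 := by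
        rw [hA₂def, natDegree_divByMonic _ hRm, hRd']
        omega
      exact degree_le_natDegree.trans (by exact_mod_cast Nat.cast_le.mpr h2)
    refine ⟨(R, A₂, A₃), ⟨hRm, hRdeg, hA₂le, hA₃le, by
      show P = R ^ 3 + A₂ * R + A₃
      linear_combination -hsum⟩, ?_⟩
    -- uniqueness
    rintro ⟨R', A₂', A₃'⟩ ⟨hRm', hRd₁', hA₂', hA₃', heq'⟩
    have hRd'' : R'.natDegree = 4 := natDegree_eq_of_degree_eq_some hRd₁'
    have hdeg' : (P - R' ^ 3).degree ≤ 6 := by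
      have : P - R' ^ 3 = A₂' * R' + A₃' := by rw [heq']; ring
      rw [this]
      refine (degree_add_le _ _).trans ?_
      rw [max_le_iff]
      refine ⟨(degree_mul_le _ _).trans ?_, hA₃'.trans (by norm_num)⟩
      calc A₂'.degree + R'.degree ≤ (2 : WithBot ℕ) + 4 := add_le_add hA₂' (le_of_eq hRd₁')
        _ = 6 := by norm_num
    have hdvd' := (key R' hRm' hRd'').mp hdeg'
    have hrefldeg : (reflect 4 R').natDegree ≤ 4 := by
      rw [natDegree_le_iff_coeff_eq_zero]
      intro N hN
      rw [coeff_reflect, revAt_eq_self_of_lt (by omega)]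
      exact coeff_eq_zero_of_natDegree_lt (by omega)
    have hRR' : reflect 4 R' = r := by
      have hdvd2 : (PowerSeries.X : PowerSeries K) ^ 6
          ∣ ((r : PowerSeries K) - ((reflect 4 R' : K[X]) : PowerSeries K)) := by
        have := dvd_sub hdvd' hdvd
        have heq2 : S - ((reflect 4 R' : K[X]) : PowerSeries K)
            - (S - (r : PowerSeries K))
            = (r : PowerSeries K) - ((reflect 4 R' : K[X]) : PowerSeries K) := by ring
        rwa [heq2] at this
      rw [PowerSeries.X_pow_dvd_iff] at hdvd2
      ext m
      rcases lt_or_ge m 6 with hm | hm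
      · have := hdvd2 m hm
        rw [map_sub, sub_eq_zero, Polynomial.coeff_coe, Polynomial.coeff_coe] at this
        exact this.symm
      · rw [coeff_eq_zero_of_natDegree_lt (by omega),
          coeff_eq_zero_of_natDegree_lt (by omega)]
    have hReq : R' = R := by
      rw [hRdef, ← hRR', reflect_reflect']
    rw [hReq] at heq'
    have huniq := div_modByMonic_unique (f := P - R ^ 3) A₂' A₃' hRm
      (by constructor
          · linear_combination -heq'
          · rw [hRdeg]
            exact lt_of_le_of_lt hA₃' (by norm_num))
    have : (R', A₂', A₃') = (R, A₂', A₃') := by rw [hReq]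
    rw [this, hA₂def, hA₃def, huniq.1, huniq.2]
end

section
/- The coefficient F(x₁,…,x₁₂) of X⁻¹ in the Laurent expansion at infinity of (∏ᵢ₌₁¹²(X − xᵢ))^{1/3} is a homogeneous polynomial of degree 5 in x₁,…,x₁₂ which is invariant under the simultaneous translation xᵢ ↦ xᵢ − ξ for all ξ. -/
open PowerSeries

variable {A : Type*} [CommRing A] [Algebra ℚ A]

/-- coefficientwise extension of a derivation to power series -/
noncomputable def dps (d : Derivation ℚ A A) : Derivation ℚ (PowerSeries A) (PowerSeries A) where
  toFun f := PowerSeries.mk fun n => d (PowerSeries.coeff n f)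
  map_add' f g := by ext n; simp
  map_smul' c f := by ext n; simp
  map_one_eq_zero' := by
    ext n
    simp [PowerSeries.coeff_one]
    split <;> simp
  leibniz' f g := by
    ext n
    simp only [LinearMap.coe_mk, AddHom.coe_mk, smul_eq_mul]
    rw [map_add]
    simp only [PowerSeries.coeff_mk, PowerSeries.coeff_mul, map_sum,
      Derivation.leibniz, smul_eq_mul, PowerSeries.coeff_mk]
    rw [Finset.sum_add_distrib]
    congr 1
    rw [← Finset.Nat.sum_antidiagonal_swap]
    apply Finset.sum_congr rfl; intro x hx
    simp only [Prod.fst_swap, Prod.snd_swap, mul_comm]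

@[simp] lemma coeff_dps (d : Derivation ℚ A A) (f : PowerSeries A) (n : ℕ) :
    PowerSeries.coeff n (dps d f) = d (PowerSeries.coeff n f) := by
  simp [dps, Derivation.mk_coe]

lemma derivation_prod_eigen {ι B : Type*} [CommRing B] [Algebra ℚ B]
    (δ : Derivation ℚ B B) (s : Finset ι) (f : ι → B) (c : B)
    (h : ∀ i ∈ s, δ (f i) = c * f i) :
    δ (∏ i ∈ s, f i) = (s.card : B) * c * ∏ i ∈ s, f i := by
  classical
  induction s using Finset.induction_on with
  | empty => simp
  | @insert a s ha ih =>
    rw [Finset.prod_insert ha, Derivation.leibniz, smul_eq_mul, smul_eq_mul,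
      ih (fun i hi => h i (Finset.mem_insert_of_mem hi)), h a (Finset.mem_insert_self a s),
      Finset.card_insert_of_notMem ha]
    push_cast
    ring

lemma dps_C_mul_X (d : Derivation ℚ A A) (a : A) :
    dps d (PowerSeries.C a * PowerSeries.X) = PowerSeries.C (d a) * PowerSeries.X := by
  ext n
  rw [coeff_dps]
  simp only [PowerSeries.coeff_C_mul, PowerSeries.coeff_X]
  split <;> simp

lemma derivation_sum_apply {ι B : Type*} [CommRing B] [Algebra ℚ B]
    (s : Finset ι) (δ : ι → Derivation ℚ B B) (a : B) :
    (∑ i ∈ s, δ i) a = ∑ i ∈ s, δ i a := by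
  classical
  induction s using Finset.induction_on with
  | empty => simp
  | @insert j s hj ih => rw [Finset.sum_insert hj, Derivation.add_apply, ih, Finset.sum_insert hj]

noncomputable abbrev R12 := MvPolynomial (Fin 12) ℚ

noncomputable def Dtr : Derivation ℚ R12 R12 := ∑ i : Fin 12, MvPolynomial.pderiv i

noncomputable def Eul : Derivation ℚ R12 R12 :=
  ∑ i : Fin 12, (MvPolynomial.X i : R12) • MvPolynomial.pderiv i

lemma Dtr_apply (p : R12) : Dtr p = ∑ i : Fin 12, MvPolynomial.pderiv i p :=
  derivation_sum_apply _ _ _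

lemma Eul_apply (p : R12) :
    Eul p = ∑ i : Fin 12, MvPolynomial.X i * MvPolynomial.pderiv i p := by
  rw [Eul, derivation_sum_apply]
  exact Finset.sum_congr rfl fun i _ => by rw [Derivation.smul_apply, smul_eq_mul]

lemma Dtr_X (j : Fin 12) : Dtr (MvPolynomial.X j) = 1 := by
  rw [Dtr_apply, Finset.sum_eq_single j (fun i _ hij => MvPolynomial.pderiv_X_of_ne (Ne.symm hij))
    (fun h => absurd (Finset.mem_univ j) h)]
  exact MvPolynomial.pderiv_X_self j

lemma Eul_X (j : Fin 12) : Eul (MvPolynomial.X j) = MvPolynomial.X j := by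
  rw [Eul_apply, Finset.sum_eq_single j
    (fun i _ hij => by rw [MvPolynomial.pderiv_X_of_ne (Ne.symm hij), mul_zero])
    (fun h => absurd (Finset.mem_univ j) h), MvPolynomial.pderiv_X_self, mul_one]

noncomputable def der' : Derivation ℚ (PowerSeries R12) (PowerSeries R12) :=
  (PowerSeries.derivative R12).restrictScalars ℚ

set_option synthInstance.maxHeartbeats 1000000 in
noncomputable def Δ : Derivation ℚ (PowerSeries R12) (PowerSeries R12) :=
  dps Dtr - (PowerSeries.X : PowerSeries R12) ^ 2 • der'

set_option synthInstance.maxHeartbeats 1000000 in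
noncomputable def Γ : Derivation ℚ (PowerSeries R12) (PowerSeries R12) :=
  dps Eul - (PowerSeries.X : PowerSeries R12) • der'

lemma Δ_factor (i : Fin 12) :
    Δ (1 - PowerSeries.C (MvPolynomial.X i) * PowerSeries.X) =
      (-PowerSeries.X) * (1 - PowerSeries.C (MvPolynomial.X i) * PowerSeries.X) := by
  rw [Δ, Derivation.sub_apply, Derivation.smul_apply, map_sub, map_sub, dps_C_mul_X, Dtr_X]
  rw [der', Derivation.restrictScalars_apply]
  simp only [Derivation.restrictScalars_apply, map_one, Derivation.map_one_eq_zero, map_sub, Derivation.leibniz,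
    PowerSeries.derivative_X, PowerSeries.derivative_C, smul_eq_mul]
  ring

lemma Γ_factor (i : Fin 12) :
    Γ (1 - PowerSeries.C (MvPolynomial.X i) * PowerSeries.X) =
      0 * (1 - PowerSeries.C (MvPolynomial.X i) * PowerSeries.X) := by
  rw [Γ, Derivation.sub_apply, Derivation.smul_apply, map_sub, map_sub, dps_C_mul_X, Eul_X]
  rw [der', Derivation.restrictScalars_apply]
  simp only [Derivation.restrictScalars_apply, map_one, Derivation.map_one_eq_zero, map_sub, Derivation.leibniz,
    PowerSeries.derivative_X, PowerSeries.derivative_C, smul_eq_mul]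
  ring

section main
variable {S : PowerSeries R12}

lemma three_S_sq_ne (hS1 : PowerSeries.constantCoeff S = 1) :
    (3 : PowerSeries R12) * S ^ 2 ≠ 0 := by
  apply mul_ne_zero
  · intro h
    have := congrArg (PowerSeries.constantCoeff (R := R12)) h
    rw [map_ofNat, map_zero] at this
    exact (by norm_num : (3 : R12) ≠ 0) this
  · apply pow_ne_zero
    intro h
    rw [h, map_zero] at hS1
    exact one_ne_zero hS1.symm

lemma Delta_S (hS1 : PowerSeries.constantCoeff S = 1)
    (hS3 : S ^ 3 = ∏ i, (1 - PowerSeries.C (MvPolynomial.X i) * PowerSeries.X)) :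
    Δ S = PowerSeries.C (R := R12) (-4) * (PowerSeries.X * S) := by
  have hC : (PowerSeries.C (R := R12)) (-4) = -4 := by rw [map_neg, map_ofNat]
  have h1 : Δ (S ^ 3) = 12 * (-PowerSeries.X) * S ^ 3 := by
    rw [hS3, derivation_prod_eigen Δ Finset.univ _ (-PowerSeries.X) (fun i _ => Δ_factor i),
      ← hS3]
    norm_num
  have h2 : Δ (S ^ 3) = (3 : PowerSeries R12) * S ^ 2 * Δ S := by
    rw [Derivation.leibniz_pow]
    simp only [smul_eq_mul, nsmul_eq_mul]
    push_cast
    ring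
  apply mul_left_cancel₀ (three_S_sq_ne hS1)
  rw [← h2, h1, hC]
  ring

lemma Gamma_S (hS1 : PowerSeries.constantCoeff S = 1)
    (hS3 : S ^ 3 = ∏ i, (1 - PowerSeries.C (MvPolynomial.X i) * PowerSeries.X)) :
    Γ S = 0 := by
  have h1 : Γ (S ^ 3) = 0 := by
    rw [hS3, derivation_prod_eigen Γ Finset.univ _ 0 (fun i _ => Γ_factor i)]
    ring
  have h2 : Γ (S ^ 3) = (3 : PowerSeries R12) * S ^ 2 * Γ S := by
    rw [Derivation.leibniz_pow]
    simp only [smul_eq_mul, nsmul_eq_mul]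
    push_cast
    ring
  apply mul_left_cancel₀ (three_S_sq_ne hS1)
  rw [← h2, h1, mul_zero]

end main

lemma Dtr_coeff5 (S : PowerSeries R12) (hS1 : PowerSeries.constantCoeff S = 1)
    (hS3 : S ^ 3 = ∏ i, (1 - PowerSeries.C (MvPolynomial.X i) * PowerSeries.X)) :
    Dtr (PowerSeries.coeff 5 S) = 0 := by
  have h := congrArg (PowerSeries.coeff (R := R12) 5) (Delta_S hS1 hS3)
  rw [Δ, Derivation.sub_apply, Derivation.smul_apply, map_sub, coeff_dps, smul_eq_mul] at h
  rw [show (5 : ℕ) = 3 + 2 from rfl, PowerSeries.coeff_X_pow_mul, PowerSeries.coeff_C_mul,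
    show (3 + 2 : ℕ) = 4 + 1 from rfl, PowerSeries.coeff_succ_X_mul] at h
  rw [der', Derivation.restrictScalars_apply, PowerSeries.coeff_derivative] at h
  rw [show (3 + 1 : ℕ) = 4 from rfl] at h
  push_cast at h
  linear_combination h

lemma Eul_coeff5 (S : PowerSeries R12) (hS1 : PowerSeries.constantCoeff S = 1)
    (hS3 : S ^ 3 = ∏ i, (1 - PowerSeries.C (MvPolynomial.X i) * PowerSeries.X)) :
    Eul (PowerSeries.coeff 5 S) = 5 * PowerSeries.coeff 5 S := by
  have h := congrArg (PowerSeries.coeff (R := R12) 5) (Gamma_S hS1 hS3)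
  rw [Γ, Derivation.sub_apply, Derivation.smul_apply, map_sub, coeff_dps, smul_eq_mul,
    map_zero] at h
  rw [show (5 : ℕ) = 4 + 1 from rfl, PowerSeries.coeff_succ_X_mul] at h
  rw [der', Derivation.restrictScalars_apply, PowerSeries.coeff_derivative] at h
  rw [show (4 + 1 : ℕ) = 5 from rfl] at h
  push_cast at h
  linear_combination h

lemma X_mul_pderiv_monomial (u : Fin 12 →₀ ℕ) (a : ℚ) (i : Fin 12) :
    (MvPolynomial.X i : R12) * MvPolynomial.pderiv i (MvPolynomial.monomial u a) =
      MvPolynomial.monomial u ((u i : ℚ) * a) := by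
  rw [MvPolynomial.pderiv_monomial, MvPolynomial.X, MvPolynomial.monomial_mul]
  by_cases h : u i = 0
  · rw [h]; simp
  · rw [add_tsub_cancel_of_le (Finsupp.single_le_iff.2 (Nat.one_le_iff_ne_zero.2 h))]
    rw [one_mul, mul_comm]

lemma coeff_Eul (p : R12) (d : Fin 12 →₀ ℕ) :
    MvPolynomial.coeff d (Eul p) = (∑ i : Fin 12, (d i : ℚ)) * MvPolynomial.coeff d p := by
  induction p using MvPolynomial.induction_on' with
  | add p q hp hq => rw [map_add, MvPolynomial.coeff_add, MvPolynomial.coeff_add, hp, hq]; ring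
  | monomial u a =>
    rw [Eul_apply]
    have : ∀ i : Fin 12, (MvPolynomial.X i : R12) *
        MvPolynomial.pderiv i (MvPolynomial.monomial u a) =
        MvPolynomial.monomial u ((u i : ℚ) * a) := fun i => X_mul_pderiv_monomial u a i
    rw [Finset.sum_congr rfl fun i _ => this i]
    have hsum : (∑ i : Fin 12, MvPolynomial.monomial u ((u i : ℚ) * a)) =
        MvPolynomial.monomial u ((∑ i : Fin 12, (u i : ℚ)) * a) := by
      rw [Finset.sum_mul, map_sum (MvPolynomial.monomial u) _ Finset.univ]
    rw [hsum, MvPolynomial.coeff_monomial, MvPolynomial.coeff_monomial]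
    split
    · next h => subst h; rfl
    · rw [mul_zero]

lemma homog_of_Eul (p : R12) (h : Eul p = 5 * p) : p.IsHomogeneous 5 := by
  intro d hd
  have h5 : (5 : R12) = MvPolynomial.C (5 : ℚ) := by rw [map_ofNat]
  have hc := congrArg (MvPolynomial.coeff d) h
  rw [coeff_Eul, h5, MvPolynomial.coeff_C_mul] at hc
  have hsum : (∑ i : Fin 12, (d i : ℚ)) = 5 := mul_right_cancel₀ hd hc
  have hnat : (∑ i : Fin 12, d i) = 5 := by exact_mod_cast hsum
  rw [Finsupp.weight_apply, Finsupp.sum_fintype _ _ (fun i => by simp)]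
  simpa using hnat

lemma derivative_aeval (f : Fin 12 → Polynomial ℚ) (p : R12) :
    Polynomial.derivative (MvPolynomial.aeval f p) =
      ∑ i : Fin 12, MvPolynomial.aeval f (MvPolynomial.pderiv i p) *
        Polynomial.derivative (f i) := by
  induction p using MvPolynomial.induction_on with
  | C a => simp
  | add p q hp hq =>
    simp only [map_add, Polynomial.derivative_add, hp, hq, add_mul, ← Finset.sum_add_distrib]
  | mul_X p j ih =>
    have key : ∀ i : Fin 12,
        MvPolynomial.aeval f (MvPolynomial.pderiv i (p * MvPolynomial.X j)) *
          Polynomial.derivative (f i) =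
        (MvPolynomial.aeval f (MvPolynomial.pderiv i p) * Polynomial.derivative (f i)) * f j +
          (if i = j then MvPolynomial.aeval f p * Polynomial.derivative (f j) else 0) := by
      intro i
      rw [Derivation.leibniz, smul_eq_mul, smul_eq_mul, map_add, map_mul, map_mul,
        MvPolynomial.aeval_X]
      by_cases h : i = j
      · subst h
        rw [MvPolynomial.pderiv_X_self, map_one, if_pos rfl]
        ring
      · rw [MvPolynomial.pderiv_X_of_ne (Ne.symm h), map_zero, if_neg h]
        ring
    rw [map_mul, MvPolynomial.aeval_X, Polynomial.derivative_mul, ih,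
      Finset.sum_congr rfl fun i _ => key i, Finset.sum_add_distrib, Finset.sum_ite_eq'
      Finset.univ j fun _ => MvPolynomial.aeval f p * Polynomial.derivative (f j)]
    rw [if_pos (Finset.mem_univ j), Finset.sum_mul]

lemma translation_invariant_of_Dtr (p : R12) (h : Dtr p = 0) (v : Fin 12 → ℚ) (ξ : ℚ) :
    MvPolynomial.eval (fun i => v i - ξ) p = MvPolynomial.eval v p := by
  set f : Fin 12 → Polynomial ℚ := fun i => Polynomial.C (v i) - Polynomial.X with hf
  set q : Polynomial ℚ := MvPolynomial.aeval f p with hq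
  have hqd : Polynomial.derivative q = 0 := by
    rw [hq, derivative_aeval]
    have : ∀ i : Fin 12, MvPolynomial.aeval f (MvPolynomial.pderiv i p) *
        Polynomial.derivative (f i) = -(MvPolynomial.aeval f (MvPolynomial.pderiv i p)) := by
      intro i
      rw [hf]
      simp [mul_comm]
    rw [Finset.sum_congr rfl fun i _ => this i, ← neg_zero]
    rw [show (0 : Polynomial ℚ) = MvPolynomial.aeval f (Dtr p) by rw [h, map_zero]]
    rw [Dtr_apply, map_sum, Finset.sum_neg_distrib]
  have hqC : q = Polynomial.C (q.coeff 0) := Polynomial.eq_C_of_derivative_eq_zero hqd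
  have heval : ∀ c : ℚ, Polynomial.eval c q = MvPolynomial.eval (fun i => v i - c) p := by
    intro c
    have hcomp : (Polynomial.aeval c).comp (MvPolynomial.aeval f) =
        MvPolynomial.aeval (fun i => v i - c) := by
      apply MvPolynomial.algHom_ext
      intro i
      simp [hf]
    have := congrArg (fun φ => φ p) hcomp
    simp only [AlgHom.comp_apply] at this
    rw [hq, ← Polynomial.coe_aeval_eq_eval, this]
    rw [← MvPolynomial.coe_aeval_eq_eval]
    rfl
  have h1 := heval ξ
  have h2 := heval 0
  rw [hqC] at h1 h2
  simp only [Polynomial.eval_C] at h1 h2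
  rw [← h1, h2]
  simp

/-- Mestre's quintic: work over the polynomial ring `ℚ[x₁,…,x₁₂]` and let `S` be the
formal cube root (in the variable `t = X⁻¹`, with constant term 1) of
`∏ᵢ (1 - xᵢ t)`, so that `(∏ᵢ (X - xᵢ))^{1/3} = X⁴ S(X⁻¹)`.  Then the coefficient
`F = F(x₁,…,x₁₂)` of `X⁻¹` (i.e. of `t⁵` in `S`) is a homogeneous polynomial of
degree 5 in `x₁,…,x₁₂`, invariant under simultaneous translation `xᵢ ↦ xᵢ - ξ`. -/
theorem mestre_quintic_homogeneous_translation_invariant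
    (S : PowerSeries (MvPolynomial (Fin 12) ℚ))
    (hS1 : PowerSeries.constantCoeff S = 1)
    (hS3 : S ^ 3 = ∏ i, (1 - PowerSeries.C (MvPolynomial.X i) * PowerSeries.X)) :
    (PowerSeries.coeff 5 S).IsHomogeneous 5 ∧
      ∀ (v : Fin 12 → ℚ) (ξ : ℚ),
        MvPolynomial.eval (fun i => v i - ξ) (PowerSeries.coeff 5 S) =
          MvPolynomial.eval v (PowerSeries.coeff 5 S) := by
  exact ⟨homog_of_Eul _ (Eul_coeff5 S hS1 hS3),
    fun v ξ => translation_invariant_of_Dtr _ (Dtr_coeff5 S hS1 hS3) v ξ⟩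
end

section
/- Mestre's quintic F(x₁,…,x₁₂) vanishes on the linear subspace cut out by the six equations xᵢ + x₆₊ᵢ = 0 for 1 ≤ i ≤ 6. -/
/-- Mestre's quintic `F(x₁,…,x₁₂)` (the coefficient of `X⁻¹` in the expansion at
infinity of `(∏ᵢ (X - xᵢ))^{1/3}`, realized here pointwise: `S` is the power
series in `t = X⁻¹` with constant term 1 and `S³ = ∏ᵢ (1 - xᵢ t)`, and
`F(x) = coeff₅ S`) vanishes on the linear subspace cut out by the equations
`xᵢ + x₆₊ᵢ = 0` for `1 ≤ i ≤ 6`. -/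
theorem mestre_quintic_vanishes_on_antisymmetric_subspace
    (x : Fin 12 → ℚ)
    (hx : ∀ i : Fin 6, x ⟨i, by omega⟩ + x ⟨i + 6, by omega⟩ = 0)
    (S : PowerSeries ℚ)
    (hS1 : PowerSeries.constantCoeff S = 1)
    (hS3 : S ^ 3 = ∏ i, (1 - PowerSeries.C (x i) * PowerSeries.X)) :
    PowerSeries.coeff 5 S = 0 := by
  classical
  open PowerSeries in
  -- antisymmetry as a statement on Fin 12
  have hx' : ∀ j : Fin 12, x (j + 6) = - x j := by
    intro j
    fin_cases j <;>
      first
        | exact eq_neg_of_add_eq_zero_right (hx 0)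
        | exact eq_neg_of_add_eq_zero_right (hx 1)
        | exact eq_neg_of_add_eq_zero_right (hx 2)
        | exact eq_neg_of_add_eq_zero_right (hx 3)
        | exact eq_neg_of_add_eq_zero_right (hx 4)
        | exact eq_neg_of_add_eq_zero_right (hx 5)
        | exact eq_neg_of_add_eq_zero_left (hx 0)
        | exact eq_neg_of_add_eq_zero_left (hx 1)
        | exact eq_neg_of_add_eq_zero_left (hx 2)
        | exact eq_neg_of_add_eq_zero_left (hx 3)
        | exact eq_neg_of_add_eq_zero_left (hx 4)
        | exact eq_neg_of_add_eq_zero_left (hx 5)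
  -- the product is invariant under x ↦ -x
  have hprod : (∏ i, (1 - PowerSeries.C (- x i) * PowerSeries.X))
      = ∏ i, (1 - PowerSeries.C (x i) * PowerSeries.X) := by
    have := Equiv.prod_comp (Equiv.addRight (6 : Fin 12))
      (fun i => (1 - PowerSeries.C (x i) * PowerSeries.X))
    rw [← this]
    refine Finset.prod_congr rfl fun i _ => ?_
    simp [Equiv.addRight, hx' i]
  set T := PowerSeries.rescale (-1 : ℚ) S with hT
  have hT3 : T ^ 3 = S ^ 3 := by
    rw [hT, ← map_pow, hS3, map_prod]
    rw [← hprod]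
    refine Finset.prod_congr rfl fun i _ => ?_
    rw [map_sub, map_one, map_mul, PowerSeries.rescale_neg_one_X]
    have : (PowerSeries.rescale (-1 : ℚ)) (PowerSeries.C (x i))
        = PowerSeries.C (x i) := by
      ext n
      rcases n with _ | n
      · simp [PowerSeries.coeff_rescale]
      · simp [PowerSeries.coeff_rescale, PowerSeries.coeff_C]
    rw [this, map_neg]
    ring
  have hT1 : PowerSeries.constantCoeff T = 1 := by
    rw [hT, ← PowerSeries.coeff_zero_eq_constantCoeff_apply, PowerSeries.coeff_rescale]
    simp [PowerSeries.coeff_zero_eq_constantCoeff, hS1]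
  -- uniqueness of the cube root with constant term 1
  have hST : S = T := by
    have hfac : (S - T) * (S ^ 2 + S * T + T ^ 2) = 0 := by
      have : S ^ 3 - T ^ 3 = 0 := by rw [hT3, sub_self]
      calc (S - T) * (S ^ 2 + S * T + T ^ 2) = S ^ 3 - T ^ 3 := by ring
        _ = 0 := this
    rcases mul_eq_zero.mp hfac with h | h
    · exact sub_eq_zero.mp h
    · exfalso
      have := congrArg (PowerSeries.constantCoeff) h
      simp [hS1, hT1] at this
      norm_num at this
  -- conclude: odd coefficients vanish
  have h5 := PowerSeries.coeff_rescale S (-1 : ℚ) 5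
  rw [← hT, ← hST] at h5
  norm_num at h5
  linarith
end

section
/- The elliptic curve w² = 16s³ − 19s² + 88s − 48 over ℚ has the rational point (s, w) = (4, 32), and this point has infinite order. -/
open WeierstrassCurve

private def Wc : WeierstrassCurve ℚ :=
  { a₁ := 0, a₂ := -19, a₃ := 0, a₄ := 1408, a₆ := -12288 }

private lemma Wc_delta : Wc.toAffine.Δ ≠ 0 := by
  rw [WeierstrassCurve.Δ, WeierstrassCurve.b₂, WeierstrassCurve.b₄, WeierstrassCurve.b₆,
    WeierstrassCurve.b₈]
  norm_num [Wc]

private lemma Wc_ns {x y : ℚ}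
    (h : y ^ 2 = x ^ 3 - 19 * x ^ 2 + 1408 * x - 12288) :
    Wc.toAffine.Nonsingular x y := by
  have heq : Wc.toAffine.Equation x y := by
    rw [Affine.equation_iff]
    show y ^ 2 + 0 * x * y + 0 * y = x ^ 3 + (-19) * x ^ 2 + 1408 * x + (-12288)
    linarith
  exact (Wc.toAffine.equation_iff_nonsingular_of_Δ_ne_zero Wc_delta).mp heq

-- valuation helper
private lemma vadd {q r : ℚ} (hq : q ≠ 0)
    (hlt : padicValRat 2 q < padicValRat 2 r) :
    q + r ≠ 0 ∧ padicValRat 2 (q + r) = padicValRat 2 q := by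
  rcases eq_or_ne r 0 with rfl | hr
  · simpa using hq
  · have hne : q + r ≠ 0 := by
      intro h
      have : r = -q := by linarith [h]
      rw [this, padicValRat.neg] at hlt
      exact lt_irrefl _ hlt
    exact ⟨hne, padicValRat.add_eq_of_lt hne hq hr hlt⟩

private lemma vodd {d : ℤ} (hd : ¬ (2:ℤ) ∣ d) : padicValRat 2 (d : ℚ) = 0 := by
  rw [padicValRat.of_int, padicValInt.eq_zero_of_not_dvd hd]
  rfl

private lemma v2 : padicValRat 2 (2 : ℚ) = 1 := by
  simpa using padicValRat.self (p := 2) one_lt_two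

private lemma vof {c : ℚ} (k : ℕ) (d : ℤ) (hd : ¬ (2:ℤ) ∣ d) (hc : c = 2 ^ k * (d : ℚ)) :
    padicValRat 2 c = k := by
  have hd0 : (d : ℚ) ≠ 0 := Int.cast_ne_zero.mpr (by rintro rfl; exact hd (dvd_zero 2))
  rw [hc, padicValRat.mul (pow_ne_zero _ two_ne_zero) hd0,
    padicValRat.pow _, v2, vodd hd, mul_one, add_zero]

private lemma step {x y : ℚ} (h : Wc.toAffine.Nonsingular x y)
    (hv : padicValRat 2 x ≤ -2) :
    ∃ (x' y' : ℚ) (h' : Wc.toAffine.Nonsingular x' y'),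
      Affine.Point.some _ _ h + Affine.Point.some _ _ h = Affine.Point.some _ _ h' ∧
      padicValRat 2 x' = padicValRat 2 x - 2 := by
  set n := padicValRat 2 x with hn
  have hx0 : x ≠ 0 := by
    intro hx
    rw [hx, padicValRat.zero] at hn
    omega
  have v1408 : padicValRat 2 (1408 : ℚ) = 7 := vof 7 11 (by norm_num) (by norm_num)
  have vm12288 : padicValRat 2 (-12288 : ℚ) = 12 := vof 12 (-3) (by norm_num) (by push_cast; norm_num)
  have vm19 : padicValRat 2 (-19 : ℚ) = 0 := by
    have := vodd (d := -19) (by norm_num)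
    rw [show (((-19 : ℤ) : ℚ)) = (-19 : ℚ) by norm_num] at this
    exact this
  have v3 : padicValRat 2 (3 : ℚ) = 0 := by
    have := vodd (d := 3) (by norm_num)
    rw [show (((3 : ℤ) : ℚ)) = (3 : ℚ) by norm_num] at this
    exact this
  have vm38 : padicValRat 2 (-38 : ℚ) = 1 := vof 1 (-19) (by norm_num) (by push_cast; norm_num)
  have heq : y ^ 2 = x ^ 3 - 19 * x ^ 2 + 1408 * x - 12288 := by
    have h0 : y ^ 2 + 0 * x * y + 0 * y
        = x ^ 3 + (-19) * x ^ 2 + 1408 * x + (-12288) := (Affine.equation_iff _ _).mp h.1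
    linarith
  have hvx2 : padicValRat 2 (x ^ 2) = 2 * n := padicValRat.pow x
  have hvx3 : padicValRat 2 (x ^ 3) = 3 * n := padicValRat.pow x
  have hA := vadd (q := 1408 * x) (r := -12288)
    (mul_ne_zero (by norm_num) hx0)
    (by rw [padicValRat.mul (by norm_num) hx0, v1408, vm12288]; omega)
  have hAval : padicValRat 2 (1408 * x + -12288) = 7 + n := by
    rw [hA.2, padicValRat.mul (by norm_num) hx0, v1408]
  have hB := vadd (q := (-19) * x ^ 2) (r := 1408 * x + -12288)
    (mul_ne_zero (by norm_num) (pow_ne_zero _ hx0))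
    (by rw [padicValRat.mul (by norm_num) (pow_ne_zero _ hx0), hvx2, hAval, vm19]; omega)
  have hBval : padicValRat 2 ((-19) * x ^ 2 + (1408 * x + -12288)) = 2 * n := by
    rw [hB.2, padicValRat.mul (by norm_num) (pow_ne_zero _ hx0), hvx2, vm19, zero_add]
  have hC := vadd (q := x ^ 3) (r := (-19) * x ^ 2 + (1408 * x + -12288))
    (pow_ne_zero _ hx0)
    (by rw [hvx3, hBval]; omega)
  have hCval : padicValRat 2 (x ^ 3 + ((-19) * x ^ 2 + (1408 * x + -12288))) = 3 * n := by
    rw [hC.2, hvx3]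
  have heq' : y ^ 2 = x ^ 3 + ((-19) * x ^ 2 + (1408 * x + -12288)) := by linarith
  have hy0 : y ≠ 0 := by
    intro hy
    apply hC.1
    rw [← heq', hy]
    norm_num
  have hvy : 2 * padicValRat 2 y = 3 * n := by
    have hp : padicValRat 2 (y ^ 2) = 2 * padicValRat 2 y := padicValRat.pow y
    rw [← hp, heq', hCval]
  have hyneg : y ≠ Wc.toAffine.negY x y := by
    show y ≠ -y - 0 * x - 0
    intro hh
    apply hy0
    linarith
  set ℓ := Wc.toAffine.slope x x y y with hℓ
  have hsl : ℓ = (3 * x ^ 2 + (-38) * x + 1408) / (2 * y) := by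
    rw [hℓ, Affine.slope_of_Y_ne rfl hyneg]
    show (3 * x ^ 2 + 2 * (-19) * x + 1408 - 0 * y) / (y - (-y - 0 * x - 0)) = _
    congr 1 <;> ring
  have hM := vadd (q := 3 * x ^ 2) (r := (-38) * x)
    (mul_ne_zero (by norm_num) (pow_ne_zero _ hx0))
    (by rw [padicValRat.mul (by norm_num) (pow_ne_zero _ hx0), hvx2, v3,
            padicValRat.mul (by norm_num) hx0, vm38]; omega)
  have hMval : padicValRat 2 (3 * x ^ 2 + (-38) * x) = 2 * n := by
    rw [hM.2, padicValRat.mul (by norm_num) (pow_ne_zero _ hx0), hvx2, v3, zero_add]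
  have hN := vadd (q := 3 * x ^ 2 + (-38) * x) (r := 1408) hM.1
    (by rw [hMval, v1408]; omega)
  have hNval : padicValRat 2 (3 * x ^ 2 + (-38) * x + 1408) = 2 * n := by
    rw [hN.2, hMval]
  have h2y : (2 : ℚ) * y ≠ 0 := mul_ne_zero two_ne_zero hy0
  have hℓ0 : ℓ ≠ 0 := by
    rw [hsl]
    exact div_ne_zero hN.1 h2y
  have hvℓ : padicValRat 2 ℓ = 2 * n - 1 - padicValRat 2 y := by
    rw [hsl, padicValRat.div hN.1 h2y, hNval, padicValRat.mul two_ne_zero hy0, v2]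
    ring
  have hvℓ2 : padicValRat 2 (ℓ ^ 2) = n - 2 := by
    rw [padicValRat.pow ℓ, hvℓ]
    omega
  have hD := vadd (q := -(2 * x)) (r := 19)
    (neg_ne_zero.mpr (mul_ne_zero two_ne_zero hx0))
    (by
      rw [padicValRat.neg, padicValRat.mul two_ne_zero hx0, v2,
        show ((19 : ℚ)) = (((19 : ℤ)) : ℚ) by norm_num, vodd (by norm_num)]
      omega)
  have hDval : padicValRat 2 (-(2 * x) + 19) = 1 + n := by
    rw [hD.2, padicValRat.neg, padicValRat.mul two_ne_zero hx0, v2]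
  have hE := vadd (q := ℓ ^ 2) (r := -(2 * x) + 19) (pow_ne_zero _ hℓ0)
    (by rw [hvℓ2, hDval]; omega)
  have hxadd : Wc.toAffine.addX x x ℓ = ℓ ^ 2 + (-(2 * x) + 19) := by
    show ℓ ^ 2 + 0 * ℓ - (-19) - x - x = _
    ring
  refine ⟨Wc.toAffine.addX x x ℓ, Wc.toAffine.addY x x y ℓ,
    Affine.nonsingular_add h h fun hxy => hyneg hxy.2, Affine.Point.add_self_of_Y_ne hyneg, ?_⟩
  rw [hxadd, hE.2, hvℓ2]

private lemma some_congr {x₁ y₁ x₂ y₂ : ℚ} {h₁ : Wc.toAffine.Nonsingular x₁ y₁}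
    {h₂ : Wc.toAffine.Nonsingular x₂ y₂} (hx : x₁ = x₂) (hy : y₁ = y₂) :
    Affine.Point.some _ _ h₁ = Affine.Point.some _ _ h₂ := by
  subst hx; subst hy; rfl

private lemma x_of_some_eq {x₁ y₁ x₂ y₂ : ℚ} {h₁ : Wc.toAffine.Nonsingular x₁ y₁}
    {h₂ : Wc.toAffine.Nonsingular x₂ y₂}
    (h : Affine.Point.some _ _ h₁ = Affine.Point.some _ _ h₂) : x₁ = x₂ := by
  injection h

private lemma nofin {x y : ℚ} (h : Wc.toAffine.Nonsingular x y)
    (hv : padicValRat 2 x ≤ -2) : ¬ IsOfFinAddOrder (Affine.Point.some _ _ h) := by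
  have key : ∀ k : ℕ, ∃ (x' y' : ℚ) (h' : Wc.toAffine.Nonsingular x' y'),
      (2 ^ k) • (Affine.Point.some _ _ h) = Affine.Point.some _ _ h' ∧
      padicValRat 2 x' = padicValRat 2 x - 2 * k := by
    intro k
    induction k with
    | zero => exact ⟨x, y, h, by rw [pow_zero, one_smul], by simp⟩
    | succ k ih =>
      obtain ⟨x', y', h', hQ, hval⟩ := ih
      have hv' : padicValRat 2 x' ≤ -2 := by omega
      obtain ⟨x'', y'', h'', hadd, hval2⟩ := step h' hv'
      refine ⟨x'', y'', h'', ?_, by push_cast; omega⟩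
      have h2 : (2 : ℕ) ^ (k + 1) = 2 ^ k + 2 ^ k := by ring
      rw [h2, add_nsmul, hQ, hadd]
  intro hfin
  set d := addOrderOf (Affine.Point.some _ _ h) with hd
  have hd0 : 0 < d := hfin.addOrderOf_pos
  haveI : NeZero d := ⟨hd0.ne'⟩
  obtain ⟨k, l, hkl, hfkl⟩ :=
    Finite.exists_ne_map_eq_of_infinite (fun k : ℕ => ((2 ^ k : ℕ) : ZMod d))
  wlog hlt : k < l generalizing k l
  · exact this l k hkl.symm hfkl.symm (by omega)
  have hle : (2 : ℕ) ^ k ≤ 2 ^ l := Nat.pow_le_pow_right (by norm_num) hlt.le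
  have hdvd : d ∣ 2 ^ l - 2 ^ k := by
    rw [← ZMod.natCast_eq_zero_iff, Nat.cast_sub hle]
    exact sub_eq_zero_of_eq hfkl.symm
  have hsmul : (2 ^ l) • (Affine.Point.some _ _ h) = (2 ^ k) • (Affine.Point.some _ _ h) := by
    have hz : (2 ^ l - 2 ^ k) • (Affine.Point.some _ _ h) = 0 :=
      addOrderOf_dvd_iff_nsmul_eq_zero.mp (hd ▸ hdvd)
    calc (2 ^ l) • (Affine.Point.some _ _ h)
        = (2 ^ k + (2 ^ l - 2 ^ k)) • (Affine.Point.some _ _ h) := by rw [Nat.add_sub_cancel' hle]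
      _ = (2 ^ k) • (Affine.Point.some _ _ h) + (2 ^ l - 2 ^ k) • (Affine.Point.some _ _ h) := add_nsmul ..
      _ = (2 ^ k) • (Affine.Point.some _ _ h) := by rw [hz, add_zero]
  obtain ⟨xk, yk, hk, hQk, hvk⟩ := key k
  obtain ⟨xl, yl, hl, hQl, hvl⟩ := key l
  have hxx : xl = xk := x_of_some_eq (by rw [← hQl, ← hQk, hsmul])
  rw [hxx] at hvl
  omega

private lemma h1 : Wc.toAffine.Nonsingular 64 512 := Wc_ns (by norm_num)
private lemma h2 : Wc.toAffine.Nonsingular 12 60 := Wc_ns (by norm_num)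
private lemma h3 : Wc.toAffine.Nonsingular (3136/169) (-257024/2197) := Wc_ns (by norm_num)
private lemma h6 : Wc.toAffine.Nonsingular (393181203/10647169) (8799713526960/34741712447) :=
  Wc_ns (by norm_num)
private lemma h12 : Wc.toAffine.Nonsingular
    (34675422745590244550167846503094801/3297852344003410475578279325721600)
    (-7524034267241823083403957958712807915775198634864249/189385537282300636029537391855022619445812596736000) :=
  Wc_ns (by norm_num)

private lemma e2 : Affine.Point.some _ _ h1 + Affine.Point.some _ _ h1 = Affine.Point.some _ _ h2 := by
  have hy : (512:ℚ) ≠ Wc.toAffine.negY 64 512 := by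
    show (512:ℚ) ≠ -512 - 0*64 - 0
    norm_num
  rw [Affine.Point.add_some (fun hxy => hy hxy.2)]
  exact some_congr
    (by rw [Affine.slope_of_Y_ne rfl hy]
        norm_num [Affine.addX, Affine.negY, Wc])
    (by rw [Affine.slope_of_Y_ne rfl hy]
        norm_num [Affine.addY, Affine.addX, Affine.negAddY, Affine.negY, Wc])

private lemma e3 : Affine.Point.some _ _ h2 + Affine.Point.some _ _ h1 = Affine.Point.some _ _ h3 := by
  have hx : (12:ℚ) ≠ 64 := by norm_num
  rw [Affine.Point.add_some (fun hxy => hx hxy.1)]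
  exact some_congr
    (by rw [Affine.slope_of_X_ne hx]
        norm_num [Affine.addX, Affine.negY, Wc])
    (by rw [Affine.slope_of_X_ne hx]
        norm_num [Affine.addY, Affine.addX, Affine.negAddY, Affine.negY, Wc])

private lemma e6 : Affine.Point.some _ _ h3 + Affine.Point.some _ _ h3 = Affine.Point.some _ _ h6 := by
  have hy : (-257024/2197:ℚ) ≠ Wc.toAffine.negY (3136/169) (-257024/2197) := by
    show (-257024/2197:ℚ) ≠ -(-257024/2197) - 0*(3136/169) - 0
    norm_num
  rw [Affine.Point.add_some (fun hxy => hy hxy.2)]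
  exact some_congr
    (by rw [Affine.slope_of_Y_ne rfl hy]
        norm_num [Affine.addX, Affine.negY, Wc])
    (by rw [Affine.slope_of_Y_ne rfl hy]
        norm_num [Affine.addY, Affine.addX, Affine.negAddY, Affine.negY, Wc])

private lemma e12 : Affine.Point.some _ _ h6 + Affine.Point.some _ _ h6 = Affine.Point.some _ _ h12 := by
  have hy : (8799713526960/34741712447:ℚ) ≠
      Wc.toAffine.negY (393181203/10647169) (8799713526960/34741712447) := by
    show (8799713526960/34741712447:ℚ) ≠ -(8799713526960/34741712447) - 0*(393181203/10647169) - 0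
    norm_num
  rw [Affine.Point.add_some (fun hxy => hy hxy.2)]
  exact some_congr
    (by rw [Affine.slope_of_Y_ne rfl hy]
        norm_num [Affine.addX, Affine.negY, Wc])
    (by rw [Affine.slope_of_Y_ne rfl hy]
        norm_num [Affine.addY, Affine.addX, Affine.negAddY, Affine.negY, Wc])

private lemma v12P : padicValRat 2
    (34675422745590244550167846503094801/3297852344003410475578279325721600 : ℚ) = -10 := by
  have ha : ¬ (2:ℤ) ∣ 34675422745590244550167846503094801 := by norm_num
  have hb : ¬ (2:ℤ) ∣ 3220558929690830542556913404025 := by norm_num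
  have hx : (34675422745590244550167846503094801/3297852344003410475578279325721600 : ℚ)
      = ((34675422745590244550167846503094801:ℤ) : ℚ)
        / ((2:ℚ)^10 * ((3220558929690830542556913404025:ℤ) : ℚ)) := by
    norm_num
  rw [hx, padicValRat.div (by norm_num) (by norm_num),
    padicValRat.mul (by norm_num) (by norm_num), padicValRat.pow _, v2,
    vodd ha, vodd hb]
  norm_num

private lemma Pinf : ¬ IsOfFinAddOrder (Affine.Point.some _ _ h1) := by
  intro hf
  have h12f : IsOfFinAddOrder (Affine.Point.some _ _ h12) := by
    rw [← e12, ← e6, ← e3, ← e2]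
    exact (((hf.add hf).add hf).add ((hf.add hf).add hf)).add
      (((hf.add hf).add hf).add ((hf.add hf).add hf))
  exact nofin h12 (by rw [v12P]; norm_num) h12f

/-- The elliptic curve `w² = 16s³ - 19s² + 88s - 48` over `ℚ` has the rational
point `(s, w) = (4, 32)`, and this point has infinite order.  (The curve is put
in Weierstrass form via `(x, y) = (16s, 16w)`, giving
`y² = x³ - 19x² + 1408x - 12288`, under which `(4, 32)` corresponds to
`(64, 512)`; infinite order means `addOrderOf` is `0`.) -/
theorem shimura_quotient_point_infinite_order :
    ((32 : ℚ) ^ 2 = 16 * 4 ^ 3 - 19 * 4 ^ 2 + 88 * 4 - 48) ∧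
      (let W : WeierstrassCurve ℚ :=
        { a₁ := 0, a₂ := -19, a₃ := 0, a₄ := 1408, a₆ := -12288 }
       ∃ h : W.toAffine.Nonsingular 64 512,
         addOrderOf (WeierstrassCurve.Affine.Point.some 64 512 h) = 0) := by
  refine ⟨by norm_num, ?_⟩
  exact ⟨h1, addOrderOf_eq_zero_iff.mpr Pinf⟩
end
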